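/- The category of Σ-H-algebras is equivalent to the category of right-preordered groups. Explicitly: there is an equivalence of categories between (i) the category whose objects are sets X equipped with a constant 0, unary operations π₀, π₁, ι, − and a binary operation +, satisfying: (M) (X,0,+) is a monoid and π₀, π₁, ι preserve 0 and + (f(a+b)=f(a)+f(b) and f(0)=0 for f ∈ {π₀,π₁,ι}); (P1) a = π₀(a)+π₁(a) = π₁(a)+π₀(a) for all a; (P2) −(π₁(a)) = π₁(ι(a)) = π₀(π₁(a)) = π₁(π₀(a)) = 0 for all a; (P3) ι(π₁(a)) = π₀(ι(a)) for all a; (G) a+(−a) = (−a)+a = π₁(a) for all a; (Inj) ι(a) = ι(b) implies π₁(a) = π₁(b); and whose morphisms are maps preserving 0, π₀, π₁, ι, − and +; and (ii) the category whose objects are pairs (G,P) of a group G and a submonoid P ⊆ G, and whose morphisms (G,P) → (H,Q) are group homomorphisms f : G → H with f(P) ⊆ Q. -/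
import Mathlib


open CategoryTheory

universe u

/-- A Σ-H-algebra: a set with a constant `0`, unary operations `π₀, π₁, ι, -` and a
binary operation `+`, subject to the axioms (M), (P1), (P2), (P3), (G), (Inj). -/
structure SHAlg : Type (u + 1) where
  /-- the underlying set -/
  X : Type u
  zero : X
  add : X → X → X
  pi0 : X → X
  pi1 : X → X
  iota : X → X
  neg : X → X
  /-- (M): `(X, 0, +)` is a monoid -/
  add_assoc : ∀ a b c, add (add a b) c = add a (add b c)
  zero_add : ∀ a, add zero a = a
  add_zero : ∀ a, add a zero = a
  /-- (M): `π₀, π₁, ι` are monoid morphisms -/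
  pi0_zero : pi0 zero = zero
  pi0_add : ∀ a b, pi0 (add a b) = add (pi0 a) (pi0 b)
  pi1_zero : pi1 zero = zero
  pi1_add : ∀ a b, pi1 (add a b) = add (pi1 a) (pi1 b)
  iota_zero : iota zero = zero
  iota_add : ∀ a b, iota (add a b) = add (iota a) (iota b)
  /-- (P1) -/
  p1a : ∀ a, a = add (pi0 a) (pi1 a)
  p1b : ∀ a, a = add (pi1 a) (pi0 a)
  /-- (P2) -/
  p2a : ∀ a, neg (pi1 a) = zero
  p2b : ∀ a, pi1 (iota a) = zero
  p2c : ∀ a, pi0 (pi1 a) = zero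
  p2d : ∀ a, pi1 (pi0 a) = zero
  /-- (P3) -/
  p3 : ∀ a, iota (pi1 a) = pi0 (iota a)
  /-- (G) -/
  ga : ∀ a, add a (neg a) = pi1 a
  gb : ∀ a, add (neg a) a = pi1 a
  /-- (Inj) -/
  inj : ∀ a b, iota a = iota b → pi1 a = pi1 b

/-- Morphisms of Σ-H-algebras: maps preserving `0, π₀, π₁, ι, -, +`. -/
@[ext]
structure SHAlgHom (A B : SHAlg.{u}) where
  toFun : A.X → B.X
  map_zero : toFun A.zero = B.zero
  map_add : ∀ a b, toFun (A.add a b) = B.add (toFun a) (toFun b)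
  map_pi0 : ∀ a, toFun (A.pi0 a) = B.pi0 (toFun a)
  map_pi1 : ∀ a, toFun (A.pi1 a) = B.pi1 (toFun a)
  map_iota : ∀ a, toFun (A.iota a) = B.iota (toFun a)
  map_neg : ∀ a, toFun (A.neg a) = B.neg (toFun a)

/-- The category of Σ-H-algebras. -/
instance : Category SHAlg.{u} where
  Hom := SHAlgHom
  id A := { toFun := id, map_zero := rfl, map_add := fun _ _ => rfl,
            map_pi0 := fun _ => rfl, map_pi1 := fun _ => rfl,
            map_iota := fun _ => rfl, map_neg := fun _ => rfl }
  comp f g :=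
    { toFun := g.toFun ∘ f.toFun
      map_zero := by simp only [Function.comp_apply, f.map_zero, g.map_zero]
      map_add := fun a b => by
        simp only [Function.comp_apply, f.map_add, g.map_add]
      map_pi0 := fun a => by simp only [Function.comp_apply, f.map_pi0, g.map_pi0]
      map_pi1 := fun a => by simp only [Function.comp_apply, f.map_pi1, g.map_pi1]
      map_iota := fun a => by simp only [Function.comp_apply, f.map_iota, g.map_iota]
      map_neg := fun a => by simp only [Function.comp_apply, f.map_neg, g.map_neg] }
  id_comp _ := rfl
  comp_id _ := rfl
  assoc _ _ _ := rfl

/-- A right-preordered group: a group `G` together with a submonoid `P ⊆ G`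
(the positive cone). -/
structure RPoGrp : Type (u + 1) where
  /-- the underlying group -/
  carrier : Type u
  [grp : Group carrier]
  /-- the positive cone -/
  pos : Submonoid carrier

attribute [instance] RPoGrp.grp

/-- Morphisms of right-preordered groups: group homomorphisms mapping the positive cone
into the positive cone. -/
@[ext]
structure RPoGrpHom (A B : RPoGrp.{u}) where
  toHom : A.carrier →* B.carrier
  map_pos : ∀ p ∈ A.pos, toHom p ∈ B.pos

/-- The category of right-preordered groups. -/
instance : Category RPoGrp.{u} where
  Hom := RPoGrpHom
  id A := ⟨MonoidHom.id _, fun _ hp => hp⟩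
  comp f g := ⟨g.toHom.comp f.toHom, fun p hp => g.map_pos _ (f.map_pos p hp)⟩
  id_comp _ := rfl
  comp_id _ := rfl
  assoc _ _ _ := rfl
namespace SHEquiv

variable {A : SHAlg.{u}}

lemma pi1_pi1 (a : A.X) : A.pi1 (A.pi1 a) = A.pi1 a := by
  conv_rhs => rw [A.p1a (A.pi1 a), A.p2c, A.zero_add]

lemma pi0_pi0 (a : A.X) : A.pi0 (A.pi0 a) = A.pi0 a := by
  conv_rhs => rw [A.p1a (A.pi0 a), A.p2d, A.add_zero]

lemma pi0_of_pi1_zero {a : A.X} (h : A.pi1 a = A.zero) : A.pi0 a = a := by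
  conv_rhs => rw [A.p1a a, h, A.add_zero]

lemma iota_pi1 (a : A.X) : A.iota (A.pi1 a) = A.iota a := by
  rw [A.p3]
  exact pi0_of_pi1_zero (A.p2b a)

lemma pi1_neg (a : A.X) : A.pi1 (A.neg a) = A.zero := by
  set p := A.pi1 a with hp
  set q := A.pi1 (A.neg a) with hq
  have hpq : A.add p q = p := by
    rw [hp, hq, ← A.pi1_add, A.ga, pi1_pi1]
  have hiq : A.iota q = A.zero := by
    have h1 : A.add (A.iota p) (A.iota q) = A.iota p := by
      rw [← A.iota_add, hpq]
    have h2 : A.add (A.neg (A.iota p)) (A.add (A.iota p) (A.iota q))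
        = A.iota q := by
      rw [← A.add_assoc, A.gb, A.p2b, A.zero_add]
    rw [h1, A.gb, A.p2b] at h2
    exact h2.symm
  have := A.inj q A.zero (by rw [hiq, A.iota_zero])
  rw [hq, pi1_pi1, A.pi1_zero] at this
  exact this

lemma pi0_neg (a : A.X) : A.pi0 (A.neg a) = A.neg (A.pi0 a) := by
  have h1 : A.add (A.pi0 a) (A.pi0 (A.neg a)) = A.zero := by
    rw [← A.pi0_add, A.ga, A.p2c]
  have h2 : A.add (A.neg (A.pi0 a)) (A.pi0 a) = A.zero := by
    rw [A.gb, A.p2d]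
  calc A.pi0 (A.neg a)
      = A.add A.zero (A.pi0 (A.neg a)) := (A.zero_add _).symm
    _ = A.add (A.add (A.neg (A.pi0 a)) (A.pi0 a)) (A.pi0 (A.neg a)) := by rw [h2]
    _ = A.add (A.neg (A.pi0 a)) (A.add (A.pi0 a) (A.pi0 (A.neg a))) := A.add_assoc _ _ _
    _ = A.neg (A.pi0 a) := by rw [h1, A.add_zero]

/-- The underlying group of the right-preordered group associated to a Σ-H-algebra. -/
def Grp0 (A : SHAlg.{u}) : Type u := {a : A.X // A.pi1 a = A.zero}

instance (A : SHAlg.{u}) : Group (Grp0 A) where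
  mul a b := ⟨A.add a.1 b.1, by rw [A.pi1_add, a.2, b.2, A.add_zero]⟩
  one := ⟨A.zero, A.pi1_zero⟩
  inv a := ⟨A.neg a.1, pi1_neg a.1⟩
  mul_assoc a b c := Subtype.ext (A.add_assoc a.1 b.1 c.1)
  one_mul a := Subtype.ext (A.zero_add a.1)
  mul_one a := Subtype.ext (A.add_zero a.1)
  inv_mul_cancel a := Subtype.ext (by
    show A.add (A.neg a.1) a.1 = A.zero
    rw [A.gb, a.2])

@[simp] lemma grp0_mul_val (a b : Grp0 A) : (a * b).1 = A.add a.1 b.1 := rfl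
@[simp] lemma grp0_one_val : (1 : Grp0 A).1 = A.zero := rfl
@[simp] lemma grp0_inv_val (a : Grp0 A) : (a⁻¹).1 = A.neg a.1 := rfl

/-- The positive cone associated to a Σ-H-algebra. -/
def posCone (A : SHAlg.{u}) : Submonoid (Grp0 A) where
  carrier := {g | ∃ x, A.iota x = g.1}
  mul_mem' := by
    rintro g h ⟨x, hx⟩ ⟨y, hy⟩
    exact ⟨A.add x y, by rw [A.iota_add, hx, hy]; rfl⟩
  one_mem' := ⟨A.zero, A.iota_zero⟩

/-- The right-preordered group associated to a Σ-H-algebra. -/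
def toRP (A : SHAlg.{u}) : RPoGrp.{u} := ⟨Grp0 A, posCone A⟩

/-- The Σ-H-algebra associated to a right-preordered group. -/
def toSH (R : RPoGrp.{u}) : SHAlg.{u} where
  X := R.carrier × R.pos
  zero := (1, 1)
  add a b := (a.1 * b.1, a.2 * b.2)
  pi0 a := (a.1, 1)
  pi1 a := (1, a.2)
  iota a := ((a.2 : R.carrier), 1)
  neg a := (a.1⁻¹, 1)
  add_assoc a b c := by simp [mul_assoc]
  zero_add a := by simp
  add_zero a := by simp
  pi0_zero := rfl
  pi0_add a b := by simp
  pi1_zero := rfl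
  pi1_add a b := by simp
  iota_zero := by simp
  iota_add a b := by simp [Submonoid.coe_mul]
  p1a a := by simp
  p1b a := by simp
  p2a a := by simp
  p2b a := rfl
  p2c a := rfl
  p2d a := rfl
  p3 a := rfl
  ga a := by simp
  gb a := by simp
  inj a b h := by
    have : (a.2 : R.carrier) = (b.2 : R.carrier) := congrArg Prod.fst h
    have h2 : a.2 = b.2 := Subtype.ext this
    show ((1 : R.carrier), a.2) = ((1 : R.carrier), b.2)
    rw [h2]

/-- The functor from Σ-H-algebras to right-preordered groups. -/
def Gfun : SHAlg.{u} ⥤ RPoGrp.{u} where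
  obj := toRP
  map {A B} f :=
    { toHom :=
      { toFun := fun a => ⟨f.toFun a.1, by rw [← f.map_pi1, a.2, f.map_zero]⟩
        map_one' := Subtype.ext f.map_zero
        map_mul' := fun a b => Subtype.ext (f.map_add a.1 b.1) }
      map_pos := by
        rintro ⟨pv, hpv⟩ ⟨x, hx⟩
        refine ⟨f.toFun x, ?_⟩
        show B.iota (f.toFun x) = f.toFun pv
        rw [← f.map_iota]
        exact congrArg f.toFun hx }
  map_id A := by
    apply RPoGrpHom.ext
    rfl
  map_comp f g := by
    apply RPoGrpHom.ext
    rfl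

/-- The functor from right-preordered groups to Σ-H-algebras. -/
def Ffun : RPoGrp.{u} ⥤ SHAlg.{u} where
  obj := toSH
  map {R S} f :=
    { toFun := fun a => (f.toHom a.1, ⟨f.toHom a.2, f.map_pos _ a.2.2⟩)
      map_zero := by
        show (f.toHom 1, (⟨f.toHom 1, _⟩ : S.pos)) = (1, 1)
        simp
      map_add := fun a b => by
        show (f.toHom _, (⟨f.toHom _, _⟩ : S.pos)) = _
        simp [toSH]
      map_pi0 := fun a => by
        show (f.toHom _, (⟨f.toHom _, _⟩ : S.pos)) = _
        simp [toSH]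
      map_pi1 := fun a => by
        show (f.toHom _, (⟨f.toHom _, _⟩ : S.pos)) = _
        simp [toSH]
      map_iota := fun a => by
        show (f.toHom _, (⟨f.toHom _, _⟩ : S.pos)) = _
        simp [toSH]
      map_neg := fun a => by
        show (f.toHom _, (⟨f.toHom _, _⟩ : S.pos)) = _
        simp [toSH] }
  map_id A := by
    apply SHAlgHom.ext
    funext a
    exact Prod.ext rfl (Subtype.ext rfl)
  map_comp f g := by
    apply SHAlgHom.ext
    funext a
    exact Prod.ext rfl (Subtype.ext rfl)

/-- Turn the (set-theoretic) inverse of a bijective Σ-H-algebra morphism into a morphism. -/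
def homInv {A B : SHAlg.{u}} (f : SHAlgHom A B) (g : B.X → A.X)
    (h1 : ∀ a, g (f.toFun a) = a) (h2 : ∀ b, f.toFun (g b) = b) : SHAlgHom B A where
  toFun := g
  map_zero := by rw [← f.map_zero, h1]
  map_add a b := by
    conv_lhs => rw [← h2 a, ← h2 b, ← f.map_add, h1]
  map_pi0 a := by conv_lhs => rw [← h2 a, ← f.map_pi0, h1]
  map_pi1 a := by conv_lhs => rw [← h2 a, ← f.map_pi1, h1]
  map_iota a := by conv_lhs => rw [← h2 a, ← f.map_iota, h1]
  map_neg a := by conv_lhs => rw [← h2 a, ← f.map_neg, h1]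

/-- The unit morphism `A ⟶ toSH (toRP A)`. -/
def etaHom (A : SHAlg.{u}) : SHAlgHom A (toSH (toRP A)) where
  toFun a := (⟨A.pi0 a, A.p2d a⟩,
    ⟨⟨A.iota (A.pi1 a), by rw [iota_pi1]; exact A.p2b a⟩, ⟨A.pi1 a, rfl⟩⟩)
  map_zero := by
    refine Prod.ext (Subtype.ext ?_) (Subtype.ext (Subtype.ext ?_))
    · show A.pi0 A.zero = A.zero; exact A.pi0_zero
    · show A.iota (A.pi1 A.zero) = A.zero; rw [A.pi1_zero, A.iota_zero]
  map_add a b := by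
    refine Prod.ext (Subtype.ext ?_) (Subtype.ext (Subtype.ext ?_))
    · show A.pi0 (A.add a b) = A.add (A.pi0 a) (A.pi0 b); exact A.pi0_add a b
    · show A.iota (A.pi1 (A.add a b)) = A.add (A.iota (A.pi1 a)) (A.iota (A.pi1 b))
      rw [A.pi1_add, A.iota_add]
  map_pi0 a := by
    refine Prod.ext (Subtype.ext ?_) (Subtype.ext (Subtype.ext ?_))
    · show A.pi0 (A.pi0 a) = A.pi0 a; exact pi0_pi0 a
    · show A.iota (A.pi1 (A.pi0 a)) = A.zero; rw [A.p2d, A.iota_zero]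
  map_pi1 a := by
    refine Prod.ext (Subtype.ext ?_) (Subtype.ext (Subtype.ext ?_))
    · show A.pi0 (A.pi1 a) = A.zero; exact A.p2c a
    · show A.iota (A.pi1 (A.pi1 a)) = A.iota (A.pi1 a); rw [pi1_pi1]
  map_iota a := by
    refine Prod.ext (Subtype.ext ?_) (Subtype.ext (Subtype.ext ?_))
    · show A.pi0 (A.iota a) = A.iota (A.pi1 a); rw [A.p3]
    · show A.iota (A.pi1 (A.iota a)) = A.zero; rw [A.p2b, A.iota_zero]
  map_neg a := by
    refine Prod.ext (Subtype.ext ?_) (Subtype.ext (Subtype.ext ?_))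
    · show A.pi0 (A.neg a) = A.neg (A.pi0 a); exact pi0_neg a
    · show A.iota (A.pi1 (A.neg a)) = A.zero; rw [pi1_neg, A.iota_zero]

/-- The set-theoretic inverse of the unit. -/
noncomputable def thetaFun (A : SHAlg.{u}) : (toSH (toRP A)).X → A.X :=
  fun x => A.add x.1.1 (A.pi1 (Classical.choose x.2.2))

lemma theta_eta (A : SHAlg.{u}) (a : A.X) : thetaFun A ((etaHom A).toFun a) = a := by
  unfold thetaFun
  have hspec := Classical.choose_spec (((etaHom A).toFun a).2.2)
  set x := Classical.choose (((etaHom A).toFun a).2.2)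
  have hx : A.iota x = A.iota (A.pi1 a) := hspec
  have : A.pi1 x = A.pi1 a := by
    have := A.inj x (A.pi1 a) hx
    rwa [pi1_pi1] at this
  show A.add (A.pi0 a) (A.pi1 x) = a
  rw [this, ← A.p1a]

lemma eta_theta (A : SHAlg.{u}) (x : (toSH (toRP A)).X) :
    (etaHom A).toFun (thetaFun A x) = x := by
  unfold thetaFun
  have hspec := Classical.choose_spec x.2.2
  set w := Classical.choose x.2.2
  have hw : A.iota w = x.2.1.1 := hspec
  have hx1 : A.pi1 x.1.1 = A.zero := x.1.2
  refine Prod.ext (Subtype.ext ?_) (Subtype.ext (Subtype.ext ?_))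
  · show A.pi0 (A.add x.1.1 (A.pi1 w)) = x.1.1
    rw [A.pi0_add, A.p2c, A.add_zero]
    exact pi0_of_pi1_zero hx1
  · show A.iota (A.pi1 (A.add x.1.1 (A.pi1 w))) = x.2.1.1
    rw [A.pi1_add, hx1, A.zero_add, pi1_pi1, iota_pi1, hw]

/-- The counit morphism `toRP (toSH R) ⟶ R`. -/
def epsHom (R : RPoGrp.{u}) : RPoGrpHom (toRP (toSH R)) R where
  toHom :=
    { toFun := fun x => x.1.1
      map_one' := rfl
      map_mul' := fun _ _ => rfl }
  map_pos := by
    rintro p ⟨x, hx⟩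
    have : ((x.2 : R.carrier), (1 : R.pos)) = p.1 := hx
    have h1 : (x.2 : R.carrier) = p.1.1 := congrArg Prod.fst this
    show p.1.1 ∈ R.pos
    rw [← h1]; exact x.2.2

/-- The inverse of the counit. -/
def epsInv (R : RPoGrp.{u}) : RPoGrpHom R (toRP (toSH R)) where
  toHom :=
    { toFun := fun g => ⟨(g, 1), rfl⟩
      map_one' := rfl
      map_mul' := fun g h => Subtype.ext (Prod.ext rfl (mul_one (1 : R.pos)).symm) }
  map_pos := fun p hp => ⟨(1, ⟨p, hp⟩), rfl⟩

lemma snd_eq_one {R : RPoGrp.{u}} (x : Grp0 (toSH R)) : x.1.2 = 1 := by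
  have := x.2
  exact (congrArg Prod.snd this)

/-- The equivalence between Σ-H-algebras and right-preordered groups. -/
noncomputable def theEquiv : SHAlg.{u} ≌ RPoGrp.{u} := by
  refine CategoryTheory.Equivalence.mk Gfun Ffun
    (CategoryTheory.NatIso.ofComponents
      (fun A => ⟨etaHom A, homInv (etaHom A) (thetaFun A) (theta_eta A) (eta_theta A),
        ?_, ?_⟩) ?_)
    (CategoryTheory.NatIso.ofComponents
      (fun R => ⟨epsHom R, epsInv R, ?_, ?_⟩) ?_)
  · apply SHAlgHom.ext; funext a; exact theta_eta A a
  · apply SHAlgHom.ext; funext x; exact eta_theta A x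
  · intro A B f
    apply SHAlgHom.ext
    funext a
    show (etaHom B).toFun (f.toFun a) = (Ffun.map (Gfun.map f)).toFun ((etaHom A).toFun a)
    refine Prod.ext (Subtype.ext ?_) (Subtype.ext (Subtype.ext ?_))
    · show B.pi0 (f.toFun a) = f.toFun (A.pi0 a)
      rw [f.map_pi0]
    · show B.iota (B.pi1 (f.toFun a)) = f.toFun (A.iota (A.pi1 a))
      rw [f.map_iota, f.map_pi1]
  · apply RPoGrpHom.ext
    apply MonoidHom.ext
    intro x
    refine Subtype.ext (Prod.ext rfl ?_)
    exact (snd_eq_one x).symm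
  · apply RPoGrpHom.ext
    apply MonoidHom.ext
    intro g
    rfl
  · intro R S f
    apply RPoGrpHom.ext
    apply MonoidHom.ext
    intro x
    rfl

end SHEquiv

/-- the category of Σ-H-algebras is equivalent to the category of
right-preordered groups. -/
theorem shAlg_equiv_rpoGrp : Nonempty (SHAlg.{u} ≌ RPoGrp.{u}) := by
  exact ⟨SHEquiv.theEquiv⟩
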